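/- For z in ℂ ∖ B (with arg z ≠ arg a_j for all j), the function χ_m satisfies ∂χ_m/∂z̄ (z) = z̄^m |W(z)|² e^{-|z|²}. -/

import Mathlib

open MeasureTheory ComplexConjugate Metric Set Complex
open scoped Interval

/-- The union of cuts `B = ∪_j {a j t : t ≥ 1}`. -/
def cutSet (l : ℕ) (a : Fin l → ℂ) : Set ℂ :=
  ⋃ j, {z : ℂ | ∃ t : ℝ, 1 ≤ t ∧ z = a j * t}

/-- `χ_m(z) = W(z) ∫_0^{z̄} s^m W̄(s) e^{-zs} ds` along the segment from `0` to `z̄`. -/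
noncomputable def chiM (W Wb : ℂ → ℂ) (m : ℕ) (z : ℂ) : ℂ :=
  W z * ∫ t in (0:ℝ)..1,
    (starRingEnd ℂ z * t) ^ m * Wb (starRingEnd ℂ z * t) *
      Complex.exp (-(z * (starRingEnd ℂ z * t))) * starRingEnd ℂ z

/-- for `z` off the rays through the `a_j` (so `arg z ≠ arg a_j`),
`χ_m` is real-differentiable at `z` and its Wirtinger derivative satisfies
`∂χ_m/∂z̄ (z) = z̄^m |W(z)|² e^{-|z|²}`. -/
lemma isClosed_cutSet (l : ℕ) (a : Fin l → ℂ) (ha0 : ∀ i, a i ≠ 0) :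
    IsClosed (cutSet l a) := by
  refine isClosed_iUnion_of_finite fun j => ?_
  have h1 : {z : ℂ | ∃ t : ℝ, 1 ≤ t ∧ z = a j * t}
      = (fun x : ℂ => a j * x) '' (Complex.ofReal '' Set.Ici 1) := by
    ext w
    simp only [Set.mem_setOf_eq, Set.mem_image, Set.mem_Ici]
    constructor
    · rintro ⟨t, ht, rfl⟩; exact ⟨t, ⟨t, ht, rfl⟩, rfl⟩
    · rintro ⟨x, ⟨t, ht, rfl⟩, rfl⟩; exact ⟨t, ht, rfl⟩
  rw [h1]
  have h2 : IsClosed (Complex.ofReal '' Set.Ici 1) :=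
    (Complex.isometry_ofReal.isClosedEmbedding.isClosedMap) _ isClosed_Ici
  exact (Homeomorph.mulLeft₀ (a j) (ha0 j)).isClosedMap _ h2

lemma hasDerivAt_conj_comp (W Wb : ℂ → ℂ) (hWb : ∀ s, Wb s = conj (W (conj s))) (s : ℂ)
    (hd : HasDerivAt W (deriv W (conj s)) (conj s)) :
    HasDerivAt Wb (conj (deriv W (conj s))) s := by
  set d := deriv W (conj s) with hdd
  have hconj : ∀ x : ℂ, HasFDerivAt (fun y : ℂ => conj y) (conjCLE : ℂ →L[ℝ] ℂ) x := by
    intro x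
    exact (conjCLE.hasFDerivAt (x := x))
  have h2 : HasFDerivAt W ((ContinuousLinearMap.smulRight (1 : ℂ →L[ℂ] ℂ) d).restrictScalars ℝ)
      (conj s) := (hd.hasFDerivAt).restrictScalars ℝ
  have h3 : HasFDerivAt (fun y : ℂ => conj (W (conj y)))
      ((conjCLE : ℂ →L[ℝ] ℂ).comp
        (((ContinuousLinearMap.smulRight (1 : ℂ →L[ℂ] ℂ) d).restrictScalars ℝ).comp
          (conjCLE : ℂ →L[ℝ] ℂ))) s := by
    have := (hconj (W (conj s))).comp s (h2.comp s (hconj s))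
    exact this
  rw [hasDerivAt_iff_hasFDerivAt]
  have hfun : Wb = fun y : ℂ => conj (W (conj y)) := funext hWb
  rw [hfun]
  refine hasFDerivAt_of_restrictScalars ℝ h3 ?_
  ext h
  simp [mul_comm]

noncomputable def C1 (Wb : ℂ → ℂ) (m : ℕ) (x : ℂ) (t : ℝ) : ℂ :=
  (conj x * t)^m * Wb (conj x * t) * Complex.exp (-(x * (conj x * t))) * conj x * (-(conj x * t))

noncomputable def C2 (Wb : ℂ → ℂ) (m : ℕ) (x : ℂ) (t : ℝ) : ℂ :=
  ((m : ℂ) * (conj x * t)^(m-1) * t * Wb (conj x * t)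
      + (conj x * t)^m * deriv Wb (conj x * t) * t) * Complex.exp (-(x * (conj x * t))) * conj x
  + (conj x * t)^m * Wb (conj x * t) * Complex.exp (-(x * (conj x * t))) * (-(x * t)) * conj x
  + (conj x * t)^m * Wb (conj x * t) * Complex.exp (-(x * (conj x * t)))

noncomputable def FF (Wb : ℂ → ℂ) (m : ℕ) (x : ℂ) (t : ℝ) : ℂ :=
  (conj x * t)^m * Wb (conj x * t) * Complex.exp (-(x * (conj x * t))) * conj x

noncomputable def FF' (Wb : ℂ → ℂ) (m : ℕ) (x : ℂ) (t : ℝ) : ℂ →L[ℝ] ℂ :=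
  C1 Wb m x t • ContinuousLinearMap.id ℝ ℂ + C2 Wb m x t • (conjCLE : ℂ →L[ℝ] ℂ)

lemma FF'_norm (Wb : ℂ → ℂ) (m : ℕ) (x : ℂ) (t : ℝ) :
    ‖FF' Wb m x t‖ ≤ ‖C1 Wb m x t‖ + ‖C2 Wb m x t‖ := by
  refine ContinuousLinearMap.opNorm_le_bound _ (by positivity) (fun h => ?_)
  simp only [FF', ContinuousLinearMap.add_apply, ContinuousLinearMap.coe_smul', Pi.smul_apply,
    smul_eq_mul, ContinuousLinearMap.id_apply, ContinuousLinearEquiv.coe_coe, conjCLE_apply]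
  calc ‖C1 Wb m x t * h + C2 Wb m x t * conj h‖
      ≤ ‖C1 Wb m x t * h‖ + ‖C2 Wb m x t * conj h‖ := norm_add_le _ _
    _ = ‖C1 Wb m x t‖ * ‖h‖ + ‖C2 Wb m x t‖ * ‖h‖ := by
        rw [norm_mul, norm_mul, RCLike.norm_conj]
    _ = (‖C1 Wb m x t‖ + ‖C2 Wb m x t‖) * ‖h‖ := by ring

lemma FF'_continuousOn (Wb : ℂ → ℂ) (m : ℕ) (z : ℂ) (s : Set ℝ)
    (h1 : ContinuousOn (fun t => C1 Wb m z t) s)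
    (h2 : ContinuousOn (fun t => C2 Wb m z t) s) :
    ContinuousOn (fun t => FF' Wb m z t) s := by
  simp only [FF']
  exact (h1.smul (continuousOn_const (c := ContinuousLinearMap.id ℝ ℂ))).add
    (h2.smul (continuousOn_const (c := (conjCLE : ℂ →L[ℝ] ℂ))))

lemma key_hasFDerivAt (Wb : ℂ → ℂ) (m : ℕ) (t : ℝ) (x : ℂ)
    (hWbd : HasDerivAt Wb (deriv Wb (conj x * t)) (conj x * t)) :
    HasFDerivAt
      (fun y : ℂ => (conj y * t)^m * Wb (conj y * t) * Complex.exp (-(y * (conj y * t))) * conj y)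
      (C1 Wb m x t • ContinuousLinearMap.id ℝ ℂ + C2 Wb m x t • (conjCLE : ℂ →L[ℝ] ℂ)) x := by
  have hconj : ∀ w : ℂ, HasFDerivAt (fun y : ℂ => conj y) (conjCLE : ℂ →L[ℝ] ℂ) w := by
    intro w; exact (conjCLE.hasFDerivAt (x := w))
  have hw : HasFDerivAt (fun y : ℂ => conj y * (t : ℂ))
      ((t : ℂ) • (conjCLE : ℂ →L[ℝ] ℂ)) x := (hconj x).mul_const _
  have h1 : HasFDerivAt (fun y : ℂ => (conj y * (t:ℂ))^m)
      (((m : ℂ) * (conj x * t)^(m-1)) • ((t : ℂ) • (conjCLE : ℂ →L[ℝ] ℂ))) x :=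
    (hasDerivAt_pow m (conj x * (t:ℂ))).comp_hasFDerivAt x hw
  have h2 : HasFDerivAt (fun y : ℂ => Wb (conj y * (t:ℂ)))
      ((deriv Wb (conj x * t)) • ((t : ℂ) • (conjCLE : ℂ →L[ℝ] ℂ))) x :=
    hWbd.comp_hasFDerivAt x hw
  have hid : HasFDerivAt (fun y : ℂ => y) (ContinuousLinearMap.id ℝ ℂ) x := hasFDerivAt_id x
  have hinner : HasFDerivAt (fun y : ℂ => -(y * (conj y * (t:ℂ))))
      (-(x • ((t : ℂ) • (conjCLE : ℂ →L[ℝ] ℂ))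
          + (conj x * t) • ContinuousLinearMap.id ℝ ℂ)) x := (hid.mul hw).neg
  have hexp : HasFDerivAt (fun y : ℂ => Complex.exp (-(y * (conj y * (t:ℂ)))))
      ((Complex.exp (-(x * (conj x * t)))) •
        (-(x • ((t : ℂ) • (conjCLE : ℂ →L[ℝ] ℂ))
          + (conj x * t) • ContinuousLinearMap.id ℝ ℂ))) x :=
    (Complex.hasDerivAt_exp _).comp_hasFDerivAt x hinner
  have tot := ((h1.mul h2).mul hexp).mul (hconj x)
  refine tot.congr_fderiv ?_
  ext h
  simp only [ContinuousLinearMap.add_apply, ContinuousLinearMap.coe_smul', Pi.smul_apply,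
    ContinuousLinearMap.id_apply, smul_eq_mul, ContinuousLinearMap.smulRight_apply,
    ContinuousLinearMap.neg_apply, Pi.neg_apply, conjCLE_apply, C1, C2, Pi.mul_apply]
  ring

lemma key_ftc (Wb : ℂ → ℂ) (m : ℕ) (z : ℂ) (t : ℝ)
    (hWbd : HasDerivAt Wb (deriv Wb (conj z * t)) (conj z * t)) :
    HasDerivAt
      (fun r : ℝ => (r : ℂ) * ((conj z * r)^m * Wb (conj z * r)
        * Complex.exp (-(z * (conj z * r)))))
      (C2 Wb m z t) t := by
  set w := conj z with hw
  have hws : ∀ s₀ : ℂ, HasDerivAt (fun s : ℂ => w * s) w s₀ := by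
    intro s₀; simpa using (hasDerivAt_id s₀).const_mul w
  have hpow : HasDerivAt (fun s : ℂ => (w*s)^m) ((m : ℂ)*(w*(t:ℂ))^(m-1) * w) (t:ℂ) :=
    (hasDerivAt_pow m (w*(t:ℂ))).comp _ (hws _)
  have hWbs : HasDerivAt (fun s : ℂ => Wb (w*s)) (deriv Wb (w*(t:ℂ)) * w) (t:ℂ) :=
    hWbd.comp _ (hws _)
  have hexp : HasDerivAt (fun s : ℂ => Complex.exp (-(z*(w*s))))
      (Complex.exp (-(z*(w*(t:ℂ)))) * (-(z*w))) (t:ℂ) :=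
    (Complex.hasDerivAt_exp _).comp _ (((hws _).const_mul z).neg)
  have hG : HasDerivAt (fun s : ℂ => s * ((w*s)^m * Wb (w*s) * Complex.exp (-(z*(w*s)))))
      (1 * ((w*(t:ℂ))^m * Wb (w*(t:ℂ)) * Complex.exp (-(z*(w*(t:ℂ)))))
        + (t:ℂ) * (((m : ℂ)*(w*(t:ℂ))^(m-1) * w * Wb (w*(t:ℂ))
            + (w*(t:ℂ))^m * (deriv Wb (w*(t:ℂ)) * w)) * Complex.exp (-(z*(w*(t:ℂ))))
          + (w*(t:ℂ))^m * Wb (w*(t:ℂ)) * (Complex.exp (-(z*(w*(t:ℂ)))) * (-(z*w))))) (t:ℂ) :=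
    (hasDerivAt_id _).mul ((hpow.mul hWbs).mul hexp)
  have := hG.comp_ofReal
  convert this using 1
  simp only [C2, ← hw]
  ring

set_option maxHeartbeats 2000000 in
theorem wirtinger_deriv_chiM
    (l : ℕ) (hl : 0 < l) (a : Fin l → ℂ) (ha0 : ∀ i, a i ≠ 0)
    (ha : Function.Injective fun i => Complex.arg (a i))
    (c : Fin l → ℝ) (hc : ∀ i, 0 < c i)
    (W : ℂ → ℂ) (hW : DifferentiableOn ℂ W (cutSet l a)ᶜ)
    (hWabs : ∀ z ∉ cutSet l a,
      ‖W z‖ = ∏ j, (‖z - a j‖) ^ (c j))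
    (Wb : ℂ → ℂ) (hWb : ∀ s, Wb s = starRingEnd ℂ (W (starRingEnd ℂ s)))
    (m : ℕ) (z : ℂ) (hz : ∀ j, ∀ t : ℝ, 0 < t → z ≠ a j * t) :
    ∃ f : ℂ →L[ℝ] ℂ, HasFDerivAt (chiM W Wb m) f z ∧
      (f 1 + Complex.I * f Complex.I) / 2 =
        (starRingEnd ℂ z) ^ m * ((‖W z‖ : ℂ)) ^ 2 *
          Complex.exp (-((‖z‖ : ℂ)) ^ 2) := by
  have hBc : IsClosed (cutSet l a) := isClosed_cutSet l a ha0
  have hBo : IsOpen (cutSet l a)ᶜ := hBc.isOpen_compl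
  -- membership facts
  have hseg : ∀ t ∈ Icc (0:ℝ) 1, z * t ∉ cutSet l a := by
    intro t ht hmem
    obtain ⟨j, s, hs1, hse⟩ := by simpa [cutSet] using hmem
    rcases eq_or_lt_of_le ht.1 with h0 | h0
    · rw [← h0] at hse
      simp only [Complex.ofReal_zero, mul_zero] at hse
      have : a j = 0 := by
        have hs0 : (s:ℂ) ≠ 0 := by
          simpa using (by positivity : s ≠ 0)
        field_simp at hse
        exact (mul_eq_zero.mp hse.symm).resolve_right hs0
      exact ha0 j this
    · refine hz j (s / t) (by positivity) ?_
      have ht0 : (t:ℂ) ≠ 0 := by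
        simpa using ne_of_gt h0
      rw [Complex.ofReal_div, ← mul_div_assoc, eq_div_iff ht0]
      exact hse
  -- compact segment and thickening
  set K₀ : Set ℂ := (fun t : ℝ => z * t) '' Icc 0 1 with hK₀
  have hK₀c : IsCompact K₀ :=
    (isCompact_Icc).image (continuous_const.mul Complex.continuous_ofReal)
  have hdisj : Disjoint K₀ (cutSet l a) := by
    rw [Set.disjoint_left]
    rintro x ⟨t, ht, rfl⟩
    exact hseg t ht
  obtain ⟨δ, hδpos, hthick⟩ := hdisj.exists_thickenings hK₀c hBc
  set ε := δ / 2 with hε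
  have hεpos : 0 < ε := by positivity
  have hmem : ∀ x ∈ closedBall z ε, ∀ t ∈ Icc (0:ℝ) 1, x * t ∉ cutSet l a := by
    intro x hx t ht hmemB
    have h1 : x * t ∈ thickening δ K₀ := by
      rw [mem_thickening_iff]
      refine ⟨z * t, ⟨t, ht, rfl⟩, ?_⟩
      have : dist (x * (t:ℂ)) (z * t) = dist x z * t := by
        rw [Complex.dist_eq, Complex.dist_eq, ← sub_mul, norm_mul, Complex.norm_real, Real.norm_eq_abs,
          _root_.abs_of_nonneg ht.1]
      rw [this]
      calc dist x z * t ≤ ε * 1 := by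
            apply mul_le_mul (by simpa [Metric.mem_closedBall] using hx) ht.2 ht.1 (le_of_lt hεpos)
        _ < δ := by rw [mul_one, hε]; linarith
    have h2 : x * t ∈ thickening δ (cutSet l a) :=
      self_subset_thickening hδpos _ hmemB
    exact Set.disjoint_left.mp hthick h1 h2
  -- the open set U where Wb is nice
  set U : Set ℂ := (fun s : ℂ => conj s) ⁻¹' (cutSet l a)ᶜ with hU
  have hUo : IsOpen U := hBo.preimage Complex.continuous_conj
  have hmemU : ∀ x ∈ closedBall z ε, ∀ t ∈ Icc (0:ℝ) 1, conj x * t ∈ U := by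
    intro x hx t ht
    have : conj (conj x * (t:ℂ)) = x * t := by
      simp
    simp only [hU, Set.mem_preimage, Set.mem_compl_iff, this]
    exact hmem x hx t ht
  have hWbd : ∀ s ∈ U, HasDerivAt Wb (conj (deriv W (conj s))) s := by
    intro s hs
    refine hasDerivAt_conj_comp W Wb hWb s ?_
    exact (hW.differentiableAt (hBo.mem_nhds hs)).hasDerivAt
  have hWbDiffOn : DifferentiableOn ℂ Wb U := fun s hs =>
    ((hWbd s hs).differentiableAt).differentiableWithinAt
  have hWbCont : ContinuousOn Wb U := hWbDiffOn.continuousOn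
  have hWbderivCont : ContinuousOn (deriv Wb) U :=
    ((hWbDiffOn.analyticOnNhd hUo).deriv).continuousOn
  -- the integrand
  set F : ℂ → ℝ → ℂ := FF Wb m with hF
  set F' : ℂ → ℝ → ℂ →L[ℝ] ℂ := FF' Wb m with hF'
  -- continuity of C1 and C2 on the compact product set
  set S : Set (ℂ × ℝ) := closedBall z ε ×ˢ Icc (0:ℝ) 1 with hS
  have hScomp : IsCompact S := (isCompact_closedBall z ε).prod isCompact_Icc
  have hφcont : Continuous (fun p : ℂ × ℝ => conj p.1 * (p.2:ℂ)) :=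
    (Complex.continuous_conj.comp continuous_fst).mul
      (Complex.continuous_ofReal.comp continuous_snd)
  have hecont : Continuous (fun p : ℂ × ℝ => Complex.exp (-(p.1 * (conj p.1 * (p.2:ℂ))))) :=
    Complex.continuous_exp.comp (continuous_fst.mul hφcont).neg
  have hφmaps : Set.MapsTo (fun p : ℂ × ℝ => conj p.1 * (p.2:ℂ)) S U := by
    rintro ⟨x, t⟩ ⟨hx, ht⟩
    exact hmemU x hx t ht
  have hWbφ : ContinuousOn (fun p : ℂ × ℝ => Wb (conj p.1 * (p.2:ℂ))) S :=
    hWbCont.comp hφcont.continuousOn hφmaps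
  have hWbdφ : ContinuousOn (fun p : ℂ × ℝ => deriv Wb (conj p.1 * (p.2:ℂ))) S :=
    hWbderivCont.comp hφcont.continuousOn hφmaps
  have hC1cont : ContinuousOn (fun p : ℂ × ℝ => C1 Wb m p.1 p.2) S := by
    simp only [C1]
    apply ContinuousOn.mul
    apply ContinuousOn.mul
    apply ContinuousOn.mul
    apply ContinuousOn.mul
    · exact (hφcont.pow m).continuousOn
    · exact hWbφ
    · exact hecont.continuousOn
    · exact (Complex.continuous_conj.comp continuous_fst).continuousOn
    · exact (hφcont.neg).continuousOn
  have hC2cont : ContinuousOn (fun p : ℂ × ℝ => C2 Wb m p.1 p.2) S := by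
    simp only [C2]
    apply ContinuousOn.add
    apply ContinuousOn.add
    · apply ContinuousOn.mul
      apply ContinuousOn.mul
      · apply ContinuousOn.add
        · exact ((continuous_const.mul (hφcont.pow (m-1))).mul
            (Complex.continuous_ofReal.comp continuous_snd)).continuousOn.mul hWbφ
        · exact (((hφcont.pow m).continuousOn).mul hWbdφ).mul
            (Complex.continuous_ofReal.comp continuous_snd).continuousOn
      · exact hecont.continuousOn
      · exact (Complex.continuous_conj.comp continuous_fst).continuousOn
    · apply ContinuousOn.mul
      apply ContinuousOn.mul
      apply ContinuousOn.mul
      apply ContinuousOn.mul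
      · exact (hφcont.pow m).continuousOn
      · exact hWbφ
      · exact hecont.continuousOn
      · exact ((continuous_fst.mul
            (Complex.continuous_ofReal.comp continuous_snd)).neg).continuousOn
      · exact (Complex.continuous_conj.comp continuous_fst).continuousOn
    · exact (((hφcont.pow m).continuousOn).mul hWbφ).mul hecont.continuousOn
  -- bound
  obtain ⟨M, hM⟩ := hScomp.exists_bound_of_continuousOn
    ((hC1cont.norm.add hC2cont.norm) : ContinuousOn
      (fun p : ℂ × ℝ => ‖C1 Wb m p.1 p.2‖ + ‖C2 Wb m p.1 p.2‖) S)
  -- interval facts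
  have hIcc : Ι (0:ℝ) 1 ⊆ Icc 0 1 := by
    rw [Set.uIoc_of_le zero_le_one]; exact Ioc_subset_Icc_self
  have huIcc : uIcc (0:ℝ) 1 = Icc 0 1 := uIcc_of_le zero_le_one
  have hzS : z ∈ closedBall z ε := mem_closedBall_self hεpos.le
  have hWbd' : ∀ s ∈ U, HasDerivAt Wb (deriv Wb s) s := fun s hs =>
    ((hWbd s hs).differentiableAt).hasDerivAt
  -- continuity slices
  have hFScont : ContinuousOn (fun p : ℂ × ℝ => F p.1 p.2) S := by
    rw [hF]
    simp only [FF]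
    exact (((hφcont.pow m).continuousOn.mul hWbφ).mul hecont.continuousOn).mul
      (Complex.continuous_conj.comp continuous_fst).continuousOn
  have hslice : ∀ x ∈ closedBall z ε, ContinuousOn (fun t => F x t) (Icc (0:ℝ) 1) := by
    intro x hx
    have h := hFScont.comp ((Continuous.prodMk_right x).continuousOn) (fun t ht => ⟨hx, ht⟩)
    exact h
  have hC1z : ContinuousOn (fun t => C1 Wb m z t) (Icc (0:ℝ) 1) := by
    have h := hC1cont.comp ((Continuous.prodMk_right z).continuousOn)
      (fun (t : ℝ) (ht : t ∈ Icc (0:ℝ) 1) => Set.mk_mem_prod hzS ht)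
    exact h
  have hC2z : ContinuousOn (fun t => C2 Wb m z t) (Icc (0:ℝ) 1) := by
    have h := hC2cont.comp ((Continuous.prodMk_right z).continuousOn)
      (fun (t : ℝ) (ht : t ∈ Icc (0:ℝ) 1) => Set.mk_mem_prod hzS ht)
    exact h
  -- the dominated-derivative theorem
  have hm1 : ∀ᶠ x in nhds z, AEStronglyMeasurable (F x) (volume.restrict (Ι (0:ℝ) 1)) := by
    filter_upwards [Metric.closedBall_mem_nhds z hεpos] with x hx
    exact ((hslice x hx).mono hIcc).aestronglyMeasurable measurableSet_uIoc
  have hm2 : IntervalIntegrable (F z) volume 0 1 := by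
    apply ContinuousOn.intervalIntegrable
    rw [huIcc]; exact hslice z hzS
  have hm3 : AEStronglyMeasurable (F' z) (volume.restrict (Ι (0:ℝ) 1)) := by
    have hF'cont : ContinuousOn (fun t => FF' Wb m z t) (Icc (0:ℝ) 1) :=
      FF'_continuousOn Wb m z _ hC1z hC2z
    exact (hF'cont.mono hIcc).aestronglyMeasurable measurableSet_uIoc
  have hm4 : ∀ᵐ t ∂(volume : Measure ℝ), t ∈ Ι (0:ℝ) 1 →
      ∀ x ∈ ball z ε, ‖F' x t‖ ≤ (fun _ : ℝ => M) t := by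
    refine ae_of_all _ (fun t ht x hx => ?_)
    have hxS : x ∈ closedBall z ε := ball_subset_closedBall hx
    have htI : t ∈ Icc (0:ℝ) 1 := hIcc ht
    have h1 : ‖F' x t‖ ≤ ‖C1 Wb m x t‖ + ‖C2 Wb m x t‖ := FF'_norm Wb m x t
    refine h1.trans (le_trans (le_abs_self _) ?_)
    have := hM (x, t) ⟨hxS, htI⟩
    simpa [Real.norm_eq_abs] using this
  have hm5 : IntervalIntegrable (fun _ : ℝ => M) volume 0 1 := intervalIntegrable_const
  have hm6 : ∀ᵐ t ∂(volume : Measure ℝ), t ∈ Ι (0:ℝ) 1 →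
      ∀ x ∈ ball z ε, HasFDerivAt (fun y => F y t) (F' x t) x := by
    refine ae_of_all _ (fun t ht x hx => ?_)
    have hxS : x ∈ closedBall z ε := ball_subset_closedBall hx
    have := key_hasFDerivAt Wb m t x (hWbd' _ (hmemU x hxS t (hIcc ht)))
    rw [hF, hF']
    simp only [FF, FF']
    exact this
  have hIntD : HasFDerivAt (fun x => ∫ t in (0:ℝ)..1, F x t)
      (∫ t in (0:ℝ)..1, F' z t) z :=
    intervalIntegral.hasFDerivAt_integral_of_dominated_of_fderiv_le (𝕜 := ℝ)
      (F := F) (F' := F') (x₀ := z) (bound := fun _ : ℝ => M)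
      (ball_mem_nhds z hεpos) hm1 hm2 hm3 hm4 hm5 hm6
  -- integrability of the pieces
  have hC1zI : IntervalIntegrable (fun t => C1 Wb m z t •
      (ContinuousLinearMap.id ℝ ℂ)) volume 0 1 := by
    apply ContinuousOn.intervalIntegrable
    rw [huIcc]; exact hC1z.smul continuousOn_const
  have hC2zI : IntervalIntegrable (fun t => C2 Wb m z t •
      (conjCLE : ℂ →L[ℝ] ℂ)) volume 0 1 := by
    apply ContinuousOn.intervalIntegrable
    rw [huIcc]; exact hC2z.smul continuousOn_const
  have hsplit : (∫ t in (0:ℝ)..1, F' z t)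
      = (∫ t in (0:ℝ)..1, C1 Wb m z t) • ContinuousLinearMap.id ℝ ℂ
        + (∫ t in (0:ℝ)..1, C2 Wb m z t) • (conjCLE : ℂ →L[ℝ] ℂ) := by
    rw [hF']
    simp only [FF']
    rw [intervalIntegral.integral_add hC1zI hC2zI,
      intervalIntegral.integral_smul_const, intervalIntegral.integral_smul_const]
  -- FTC for the C2 integral
  have hD2 : (∫ t in (0:ℝ)..1, C2 Wb m z t)
      = conj z ^ m * Wb (conj z) * Complex.exp (-(z * conj z)) := by
    have hderiv : ∀ t ∈ uIcc (0:ℝ) 1, HasDerivAt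
        (fun r : ℝ => (r : ℂ) * ((conj z * r)^m * Wb (conj z * r)
          * Complex.exp (-(z * (conj z * r))))) (C2 Wb m z t) t := by
      intro t ht
      rw [huIcc] at ht
      exact key_ftc Wb m z t (hWbd' _ (hmemU z hzS t ht))
    have hint : IntervalIntegrable (fun t => C2 Wb m z t) volume 0 1 := by
      apply ContinuousOn.intervalIntegrable
      rw [huIcc]; exact hC2z
    rw [intervalIntegral.integral_eq_sub_of_hasDerivAt hderiv hint]
    simp
  -- derivative of W
  have hzB : z ∈ (cutSet l a)ᶜ := by
    have := hseg 1 ⟨zero_le_one, le_refl 1⟩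
    simpa using this
  have hWz : DifferentiableAt ℂ W z := hW.differentiableAt (hBo.mem_nhds hzB)
  have hWfd : HasFDerivAt W
      ((ContinuousLinearMap.smulRight (1 : ℂ →L[ℂ] ℂ) (deriv W z)).restrictScalars ℝ) z :=
    (hWz.hasDerivAt.hasFDerivAt).restrictScalars ℝ
  have htot := hWfd.mul hIntD
  have hchi : chiM W Wb m = fun y => W y * ∫ t in (0:ℝ)..1, F y t := by
    rw [hF]; rfl
  refine ⟨W z • (∫ t in (0:ℝ)..1, F' z t)
    + (∫ t in (0:ℝ)..1, F z t) •
      ((ContinuousLinearMap.smulRight (1 : ℂ →L[ℂ] ℂ) (deriv W z)).restrictScalars ℝ),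
    by rw [hchi]; exact htot, ?_⟩
  have happ : ∀ h : ℂ,
      (W z • (∫ t in (0:ℝ)..1, F' z t)
        + (∫ t in (0:ℝ)..1, F z t) •
          ((ContinuousLinearMap.smulRight (1 : ℂ →L[ℂ] ℂ) (deriv W z)).restrictScalars ℝ)) h
      = W z * ((∫ t in (0:ℝ)..1, C1 Wb m z t) * h
          + (∫ t in (0:ℝ)..1, C2 Wb m z t) * conj h)
        + (∫ t in (0:ℝ)..1, F z t) * (h * deriv W z) := by
    intro h
    rw [hsplit]
    simp only [ContinuousLinearMap.add_apply, ContinuousLinearMap.coe_smul', Pi.smul_apply,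
      smul_eq_mul, ContinuousLinearMap.smulRight_apply, ContinuousLinearMap.id_apply,
      ContinuousLinearMap.coe_restrictScalars', ContinuousLinearEquiv.coe_coe, conjCLE_apply,
      ContinuousLinearMap.one_apply]
    try ring
  have hWbz : Wb (conj z) = conj (W z) := by
    rw [hWb]
    simp
  have hz2 : ((‖z‖ : ℂ))^2 = z * conj z := by
    rw [← Complex.ofReal_pow, Complex.sq_norm, Complex.mul_conj]
  have hW2 : ((‖W z‖ : ℂ))^2 = W z * conj (W z) := by
    rw [← Complex.ofReal_pow, Complex.sq_norm, Complex.mul_conj]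
  rw [happ 1, happ Complex.I, hD2, hWbz, hz2, hW2]
  simp only [map_one, Complex.conj_I, mul_one, one_mul]
  linear_combination ((W z * (∫ t in (0:ℝ)..1, C1 Wb m z t)
    - W z * (conj z ^ m * conj (W z) * Complex.exp (-(z * conj z)))
    + (∫ t in (0:ℝ)..1, F z t) * deriv W z)/2) * Complex.I_sq
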